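/- For every real x, Clausen's integral satisfies the double-angle formula (1/2)·Cl(2x) = Cl(x) − Cl(π − x). -/
import Mathlib

/-- Clausen's integral, defined by its convergent Fourier series
`Cl x = ∑_{n=1}^∞ sin (n x) / n²`. -/
noncomputable def Cl (x : ℝ) : ℝ := ∑' n : ℕ, Real.sin (((n : ℝ) + 1) * x) / ((n : ℝ) + 1) ^ 2

lemma summable_cl (x : ℝ) :
    Summable (fun n : ℕ => Real.sin (((n : ℝ) + 1) * x) / ((n : ℝ) + 1) ^ 2) := by
  have h : Summable (fun n : ℕ => 1 / ((n : ℝ) + 1) ^ 2) := by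
    have := (summable_nat_add_iff (f := fun n : ℕ => 1 / (n : ℝ) ^ 2) 1).2
      (Real.summable_one_div_nat_pow.2 (by norm_num))
    simpa using this
  apply Summable.of_abs
  apply h.of_nonneg_of_le (fun n => abs_nonneg _)
  intro n
  rw [abs_div, abs_of_nonneg (by positivity : (0:ℝ) ≤ ((n:ℝ)+1)^2)]
  gcongr
  exact Real.abs_sin_le_one _

lemma sin_flip (x : ℝ) (n : ℕ) :
    Real.sin (((n : ℝ) + 1) * (Real.pi - x)) = (-1)^n * Real.sin (((n : ℝ) + 1) * x) := by
  have h : ((n : ℝ) + 1) * (Real.pi - x) = ((n+1 : ℕ) : ℝ) * Real.pi - ((n : ℝ) + 1) * x := by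
    push_cast; ring
  rw [h, Real.sin_nat_mul_pi_sub, pow_succ]
  ring

/-- The double-angle formula for Clausen's integral: `(1/2) Cl (2x) = Cl x − Cl (π − x)`. -/
theorem clausen_double_angle (x : ℝ) :
    (1 / 2 : ℝ) * Cl (2 * x) = Cl x - Cl (Real.pi - x) := by
  have h1 := summable_cl x
  have h2 := summable_cl (Real.pi - x)
  set D : ℕ → ℝ := fun n =>
    Real.sin (((n : ℝ) + 1) * x) / ((n : ℝ) + 1) ^ 2
      - Real.sin (((n : ℝ) + 1) * (Real.pi - x)) / ((n : ℝ) + 1) ^ 2 with hD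
  have hrhs : Cl x - Cl (Real.pi - x) = ∑' n, D n := (Summable.tsum_sub h1 h2).symm
  rw [hrhs]
  -- D vanishes on even indices
  have hDeven : ∀ n : ℕ, Even n → D n = 0 := by
    intro n hn
    simp only [hD, sin_flip, hn.neg_one_pow, one_mul, sub_self]
  have hinj : Function.Injective (fun m : ℕ => 2 * m + 1) := by
    intro a b hab; simp only [] at hab; omega
  have hsupp : Function.support D ⊆ Set.range (fun m : ℕ => 2 * m + 1) := by
    intro n hn
    rcases Nat.even_or_odd n with he | ho
    · exact absurd (hDeven n he) hn
    · obtain ⟨m, hm⟩ := ho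
      exact ⟨m, by simp only []; omega⟩
  rw [← hinj.tsum_eq hsupp]
  -- left side
  rw [Cl, ← tsum_mul_left]
  apply tsum_congr
  intro m
  have hodd : Odd (2 * m + 1) := ⟨m, by ring⟩
  simp only [hD, sin_flip, hodd.neg_one_pow]
  push_cast
  have h2x : ((2 * m : ℝ) + 1 + 1) * x = ((m : ℝ) + 1) * (2 * x) := by ring
  rw [h2x]
  have hne : ((m : ℝ) + 1) ≠ 0 := by positivity
  field_simp
  ring
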